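/- Hardy inequality with weight ω₀: for f:[0,∞)→ℝ with ∫_0^∞ (|f|²/(1+r²) + |∂_r f|²) ω₀(r)/r dr < ∞, where ω₀(r) = 1/U(r) = (1+r²)²/8, one has ∫_0^∞ |∂_r f|² ω₀/r dr ≳ ∫_0^∞ f²/(1+r²) · ω₀/r dr. -/

import Mathlib

open MeasureTheory Filter

noncomputable section

/-- The weight `ω₀(r) = 1/U(r) = (1+r²)²/8`. -/
def omega0 (r : ℝ) : ℝ := (1+r^2)^2/8

namespace HardyAux

def phi (r : ℝ) : ℝ := -(Real.log r + r^2/2)/4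

lemma keyK {r : ℝ} (hr : 0 < r) : (Real.log r + r^2/2)^2 * r^2 ≤ 2*(1+r^2)^3 := by
  have h1 : Real.log r ≤ r := (Real.log_le_sub_one_of_pos hr).trans (by linarith)
  have h2 : -(1/r) ≤ Real.log r := by
    have := Real.log_le_sub_one_of_pos (x := 1/r) (by positivity)
    rw [Real.log_div one_ne_zero (ne_of_gt hr)] at this
    simp only [Real.log_one, one_div] at this
    rw [one_div]
    linarith
  have hlo : -(1/r) ≤ Real.log r + r^2/2 := by nlinarith
  have hup : Real.log r + r^2/2 ≤ r + r^2/2 := by linarith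
  have hsq : (Real.log r + r^2/2)^2 ≤ (1/r)^2 + (r + r^2/2)^2 := by
    rcases le_or_gt 0 (Real.log r + r^2/2) with h|h
    · nlinarith [sq_nonneg (1/r)]
    · have h1r : 0 < 1/r := by positivity
      nlinarith [sq_nonneg (r + r^2/2)]
  have hmain : ((1/r)^2 + (r + r^2/2)^2) * r^2 ≤ 2*(1+r^2)^3 := by
    have hr2 : r^2 > 0 := by positivity
    have hinv : (1/r)^2 * r^2 = 1 := by field_simp
    nlinarith [sq_nonneg (r-1), sq_nonneg r, sq_nonneg (r^2-1), sq_nonneg (r^3 - r)]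
  nlinarith [sq_nonneg r]

lemma phi_sq_le {r : ℝ} (hr : 0 < r) :
    (phi r)^2 ≤ ((1+r^2)/r) * ((1+r^2)^2/r) / 8 := by
  have h := keyK hr
  have e : (phi r)^2 = (Real.log r + r^2/2)^2/16 := by rw [phi]; ring
  have e2 : (1+r^2)/r * ((1+r^2)^2/r)/8 = (1+r^2)^3/(8*r^2) := by
    field_simp
  rw [e, e2, div_le_div_iff₀ (by norm_num) (by positivity)]
  nlinarith

lemma quad {u v p a b : ℝ} (hv : 0 < v) (h : p^2 ≤ u*v/8) :
    2*a*b*p ≤ b^2*v + a^2*u/8 := by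
  have h1 : a^2 * p^2 ≤ a^2 * (u*v/8) := by nlinarith [sq_nonneg a]
  nlinarith [sq_nonneg (b*v - a*p), mul_pos hv hv]

lemma pointwise {r : ℝ} (hr : 0 < r) (a b : ℝ) :
    (2*a*b*phi r + a^2*(-(1/r + r)/4))/8 ≤
      b^2*(omega0 r/r) - (1/8)*((a^2/(1+r^2))*(omega0 r/r)) := by
  have h1 : (1+r^2)/r > 0 := by positivity
  have h2 : (1+r^2)^2/r > 0 := by positivity
  have hq := quad (u := (1+r^2)/r) (v := (1+r^2)^2/r) (p := phi r) (a := a) (b := b) h2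
    (phi_sq_le hr)
  have e1 : omega0 r / r = ((1+r^2)^2/r)/8 := by rw [omega0]; ring
  rw [e1]
  have e2 : a^2/(1+r^2) * ((1+r^2)^2/r/8) = a^2 * ((1+r^2)/r) / 8 := by
    have : (1:ℝ)+r^2 ≠ 0 := by positivity
    field_simp
  rw [e2]
  have e3 : -(1/r + r)/4 = -((1+r^2)/r)/4 := by field_simp
  rw [e3]
  nlinarith [hq]

lemma absbound {r : ℝ} (hr : 0 < r) (a b : ℝ) :
    |(2*a*b*phi r + a^2*(-(1/r + r)/4))/8| ≤
      (a^2/(1+r^2) + b^2) * (omega0 r / r) := by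
  have h1 : (1+r^2)/r > 0 := by positivity
  have h2 : (1+r^2)^2/r > 0 := by positivity
  have hq := quad (u := (1+r^2)/r) (v := (1+r^2)^2/r) (p := phi r) (a := a) (b := b) h2
    (phi_sq_le hr)
  have hq' := quad (u := (1+r^2)/r) (v := (1+r^2)^2/r) (p := phi r) (a := -a) (b := b) h2
    (phi_sq_le hr)
  have e1 : (a^2/(1+r^2) + b^2) * (omega0 r / r)
      = (a^2 * ((1+r^2)/r) + b^2 * ((1+r^2)^2/r))/8 := by
    have h1r : (1:ℝ)+r^2 ≠ 0 := by positivity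
    rw [omega0]; field_simp
  have e3 : -(1/r + r)/4 = -((1+r^2)/r)/4 := by field_simp
  rw [e1, e3]
  rw [abs_le]
  have ha2 : 0 ≤ a^2 * ((1+r^2)/r) := by positivity
  constructor
  · nlinarith
  · nlinarith

lemma hasDerivAt_phi {r : ℝ} (hr : 0 < r) : HasDerivAt phi (-(1/r + r)/4) r := by
  have h1 : HasDerivAt (fun x : ℝ => Real.log x + x^2/2) (1/r + r) r := by
    have hl := Real.hasDerivAt_log (ne_of_gt hr)
    have hp : HasDerivAt (fun x : ℝ => x^2/2) r r := by
      have := (hasDerivAt_pow 2 r).div_const 2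
      refine this.congr_deriv ?_
      simp
    have := hl.add hp
    refine this.congr_deriv ?_
    rw [one_div]
  have h2 := (h1.neg).div_const 4
  have hfun : phi = fun x : ℝ => -(Real.log x + x^2/2)/4 := rfl
  rw [hfun]
  exact h2

end HardyAux

open HardyAux

set_option maxHeartbeats 2000000 in
/-- Hardy inequality with weight `ω₀`: there is a universal constant `c > 0`
such that for every `f` with finite weighted energy,
`∫₀^∞ |∂_r f|² ω₀/r dr ≥ c ∫₀^∞ f²/(1+r²) ω₀/r dr`. -/
theorem hardy_inequality_omega0 :
    ∃ c : ℝ, 0 < c ∧ ∀ f : ℝ → ℝ,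
      ContinuousOn f (Set.Ici 0) →
      (∀ r ∈ Set.Ioi (0:ℝ), DifferentiableAt ℝ f r) →
      IntegrableOn (fun r => ((f r)^2/(1+r^2) + (deriv f r)^2) * (omega0 r / r))
        (Set.Ioi 0) →
      c * (∫ r in Set.Ioi (0:ℝ), ((f r)^2/(1+r^2)) * (omega0 r / r)) ≤
        ∫ r in Set.Ioi (0:ℝ), (deriv f r)^2 * (omega0 r / r) := by
  refine ⟨1/8, by norm_num, ?_⟩
  intro f hf hdiff hInt
  -- notation
  set A : ℝ → ℝ := fun r => (deriv f r)^2 * (omega0 r / r) with hA_def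
  set B : ℝ → ℝ := fun r => ((f r)^2/(1+r^2)) * (omega0 r / r) with hB_def
  set S : ℝ → ℝ := fun r => ((f r)^2/(1+r^2) + (deriv f r)^2) * (omega0 r / r) with hS_def
  set G : ℝ → ℝ := fun r => (f r)^2 * phi r / 8 with hG_def
  set g' : ℝ → ℝ := fun r => (2*(f r)*(deriv f r)*phi r + (f r)^2*(-(1/r + r)/4))/8
    with hg'_def
  -- basic positivity of weight
  have hw_pos : ∀ r ∈ Set.Ioi (0:ℝ), 0 < omega0 r / r := by
    intro r hr
    have : (0:ℝ) < r := hr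
    rw [omega0]; positivity
  -- measurability
  have hwm : ContinuousOn (fun r : ℝ => omega0 r / r) (Set.Ioi 0) := by
    apply ContinuousOn.div
    · apply Continuous.continuousOn; unfold omega0; continuity
    · exact continuousOn_id
    · intro x hx; exact ne_of_gt hx
  have hfm : AEStronglyMeasurable f (volume.restrict (Set.Ioi 0)) :=
    (hf.mono Set.Ioi_subset_Ici_self).aestronglyMeasurable measurableSet_Ioi
  have hdm : AEStronglyMeasurable (deriv f) (volume.restrict (Set.Ioi 0)) :=
    (measurable_deriv f).aestronglyMeasurable
  have hwm' : AEStronglyMeasurable (fun r : ℝ => omega0 r / r)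
      (volume.restrict (Set.Ioi 0)) := hwm.aestronglyMeasurable measurableSet_Ioi
  have hfa : AEMeasurable f (volume.restrict (Set.Ioi 0)) := hfm.aemeasurable
  have hda : AEMeasurable (deriv f) (volume.restrict (Set.Ioi 0)) := hdm.aemeasurable
  have hwa : AEMeasurable (fun r : ℝ => omega0 r / r) (volume.restrict (Set.Ioi 0)) :=
    hwm'.aemeasurable
  have hBm : AEStronglyMeasurable B (volume.restrict (Set.Ioi 0)) := by
    have : AEMeasurable B (volume.restrict (Set.Ioi 0)) :=
      (((hfa.pow_const 2).div ((aemeasurable_id'.pow_const 2).const_add 1)).mul hwa)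
    exact this.aestronglyMeasurable
  have hAm : AEStronglyMeasurable A (volume.restrict (Set.Ioi 0)) := by
    have : AEMeasurable A (volume.restrict (Set.Ioi 0)) :=
      ((hda.pow_const 2).mul hwa)
    exact this.aestronglyMeasurable
  have hphi_cont : ContinuousOn phi (Set.Ioi 0) := by
    have : ContinuousOn Real.log (Set.Ioi 0) :=
      Real.continuousOn_log.mono (by intro x hx; exact ne_of_gt hx)
    have h2 : ContinuousOn (fun x : ℝ => Real.log x + x^2/2) (Set.Ioi 0) :=
      this.add (Continuous.continuousOn (by continuity))
    exact (h2.neg).div_const 4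
  have hphim : AEStronglyMeasurable phi (volume.restrict (Set.Ioi 0)) :=
    hphi_cont.aestronglyMeasurable measurableSet_Ioi
  have hg'm : AEStronglyMeasurable g' (volume.restrict (Set.Ioi 0)) := by
    have hinv : AEStronglyMeasurable (fun r : ℝ => -(1/r + r)/4)
        (volume.restrict (Set.Ioi 0)) := by
      apply ContinuousOn.aestronglyMeasurable _ measurableSet_Ioi
      apply ContinuousOn.div_const
      apply ContinuousOn.neg
      apply ContinuousOn.add _ continuousOn_id
      exact ContinuousOn.div continuousOn_const continuousOn_id
        (fun x hx => ne_of_gt hx)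
    have : AEMeasurable g' (volume.restrict (Set.Ioi 0)) := by
      apply AEMeasurable.div_const
      apply AEMeasurable.add
      · exact ((aemeasurable_const.mul hfa).mul hda).mul hphim.aemeasurable
      · exact (hfa.pow_const 2).mul hinv.aemeasurable
    exact this.aestronglyMeasurable
  -- nonnegativity
  have hB_nonneg : ∀ r ∈ Set.Ioi (0:ℝ), 0 ≤ B r := by
    intro r hr
    exact mul_nonneg (by positivity) (hw_pos r hr).le
  have hA_nonneg : ∀ r ∈ Set.Ioi (0:ℝ), 0 ≤ A r := by
    intro r hr
    exact mul_nonneg (by positivity) (hw_pos r hr).le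
  have hS_eq : ∀ r, S r = B r + A r := by
    intro r; simp only [hS_def, hA_def, hB_def]; ring
  -- integrability of A and B
  have hB_int : IntegrableOn B (Set.Ioi 0) := by
    apply hInt.mono' hBm
    rw [ae_restrict_iff' measurableSet_Ioi]
    filter_upwards with r hr
    rw [Real.norm_eq_abs, abs_of_nonneg (hB_nonneg r hr), hS_eq]
    linarith [hA_nonneg r hr]
  have hA_int : IntegrableOn A (Set.Ioi 0) := by
    apply hInt.mono' hAm
    rw [ae_restrict_iff' measurableSet_Ioi]
    filter_upwards with r hr
    rw [Real.norm_eq_abs, abs_of_nonneg (hA_nonneg r hr), hS_eq]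
    linarith [hB_nonneg r hr]
  have hg'_int : IntegrableOn g' (Set.Ioi 0) := by
    apply hInt.mono' hg'm
    rw [ae_restrict_iff' measurableSet_Ioi]
    filter_upwards with r hr
    rw [Real.norm_eq_abs]
    exact absbound hr (f r) (deriv f r)
  -- derivative of G
  have hG_deriv : ∀ r ∈ Set.Ioi (0:ℝ), HasDerivAt G (g' r) r := by
    intro r hr
    have hd : HasDerivAt f (deriv f r) r := (hdiff r hr).hasDerivAt
    have h1 : HasDerivAt (fun x => (f x)^2) (2 * f r * deriv f r) r := by
      have := hd.pow 2
      refine this.congr_deriv ?_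
      ring
    have h2 := (h1.mul (hasDerivAt_phi hr)).div_const 8
    have hGfun : G = fun x => (f x)^2 * phi x / 8 := rfl
    rw [hGfun]
    exact h2
  -- main interval inequality
  set IA : ℝ := ∫ r in Set.Ioi (0:ℝ), A r with hIA_def
  set IB : ℝ := ∫ r in Set.Ioi (0:ℝ), B r with hIB_def
  have main : ∀ a b : ℝ, 0 < a → a ≤ b →
      (1/8) * ∫ r in Set.Ioc a b, B r ≤ IA + G a - G b := by
    intro a b ha hab
    have hsub : Set.Ioc a b ⊆ Set.Ioi 0 := fun x hx => lt_trans ha hx.1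
    have hIcc : Set.Icc a b ⊆ Set.Ioi 0 := fun x hx => lt_of_lt_of_le ha hx.1
    have hg'_ii : IntervalIntegrable g' volume a b := by
      rw [intervalIntegrable_iff_integrableOn_Ioc_of_le hab]
      exact hg'_int.mono_set hsub
    have hA_ii : IntervalIntegrable A volume a b := by
      rw [intervalIntegrable_iff_integrableOn_Ioc_of_le hab]
      exact hA_int.mono_set hsub
    have hB_ii : IntervalIntegrable B volume a b := by
      rw [intervalIntegrable_iff_integrableOn_Ioc_of_le hab]
      exact hB_int.mono_set hsub
    have hFTC : ∫ r in a..b, g' r = G b - G a := by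
      apply intervalIntegral.integral_eq_sub_of_hasDerivAt _ hg'_ii
      intro x hx
      rw [Set.uIcc_of_le hab] at hx
      exact hG_deriv x (hIcc hx)
    have hmono : ∫ r in a..b, g' r ≤ ∫ r in a..b, (A r - (1/8) * B r) := by
      apply intervalIntegral.integral_mono_on hab hg'_ii (hA_ii.sub (hB_ii.const_mul _))
      intro x hx
      have hx0 : 0 < x := hIcc hx
      have := pointwise hx0 (f x) (deriv f x)
      simp only [hg'_def, hA_def, hB_def]
      linarith [this]
    have hsplit : ∫ r in a..b, (A r - (1/8) * B r)
        = (∫ r in Set.Ioc a b, A r) - (1/8) * ∫ r in Set.Ioc a b, B r := by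
      rw [intervalIntegral.integral_of_le hab,
        integral_sub (hA_int.mono_set hsub) ((hB_int.mono_set hsub).const_mul _),
        integral_const_mul]
    have hAle : ∫ r in Set.Ioc a b, A r ≤ IA := by
      apply setIntegral_mono_set hA_int
      · rw [EventuallyLE, ae_restrict_iff' measurableSet_Ioi]
        filter_upwards with r hr using hA_nonneg r hr
      · exact HasSubset.Subset.eventuallyLE hsub
    rw [hFTC, hsplit] at hmono
    linarith
  have IB_nonneg : 0 ≤ IB :=
    setIntegral_nonneg measurableSet_Ioi hB_nonneg
  -- value of B
  have hBval : ∀ r : ℝ, 0 < r → B r = (f r)^2 * (1+r^2)/(8*r) := by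
    intro r hr
    simp only [hB_def, omega0]
    have h1 : (1:ℝ)+r^2 ≠ 0 := by positivity
    field_simp
  -- claim near zero: |G| gets small along a sequence to 0
  have claim0 : ∀ η : ℝ, 0 < η → ∀ ε : ℝ, 0 < ε → ε ≤ 1/2 →
      ∃ x : ℝ, 0 < x ∧ x < ε ∧ |G x| < η := by
    intro η hη ε hε hε2
    by_contra hcon
    push_neg at hcon
    -- lower bound on B near zero
    have hBlow : ∀ r : ℝ, 0 < r → r < ε → 4*η/(r*(1-Real.log r)) ≤ B r := by
      intro r hr hrε
      have hr2 : r < 1/2 := lt_of_lt_of_le hrε hε2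
      have hlog : Real.log r < -(1/2) := by
        have h1 : Real.log r < Real.log (1/2) := Real.log_lt_log hr (by linarith)
        have h2 : Real.log (1/2) = -Real.log 2 := by
          rw [one_div, Real.log_inv]
        have h3 : (1/2 : ℝ) < Real.log 2 := by
          have := Real.log_two_gt_d9; linarith
        linarith
      have h1l : (0:ℝ) < 1 - Real.log r := by linarith
      have hphi_pos : 0 < phi r := by
        rw [phi]
        have : r^2/2 < 1/8 := by nlinarith
        have : Real.log r + r^2/2 < 0 := by linarith
        linarith
      have habs : |G r| = (f r)^2 * phi r / 8 := by
        simp only [hG_def]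
        exact abs_of_nonneg (by positivity)
      have hc := hcon r hr hrε
      rw [habs] at hc
      have hf2 : 8*η/phi r ≤ (f r)^2 := by
        rw [div_le_iff₀ hphi_pos]; nlinarith
      have hphile : phi r ≤ (1 - Real.log r)/4 := by
        rw [phi]; nlinarith [sq_nonneg r]
      have hf2' : 32*η/(1 - Real.log r) ≤ (f r)^2 := by
        refine le_trans ?_ hf2
        rw [div_le_div_iff₀ h1l hphi_pos]
        nlinarith
      rw [hBval r hr]
      have e4 : 4*η/(r*(1-Real.log r)) = (32*η/(1-Real.log r))/(8*r) := by
        field_simp; ring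
      rw [e4]
      have step1 : (32*η/(1-Real.log r))/(8*r) ≤ (f r)^2/(8*r) := by
        gcongr
      refine step1.trans ?_
      have hnum : (f r)^2 ≤ (f r)^2*(1+r^2) := by nlinarith [sq_nonneg (f r), sq_nonneg r]
      have h8r : (0:ℝ) < 8*r := by linarith
      exact div_le_div_of_nonneg_right hnum h8r.le
    -- the antiderivative H
    set H : ℝ → ℝ := fun r => -Real.log (1 - Real.log r) with hH_def
    have hHder : ∀ r : ℝ, 0 < r → r < 1 → HasDerivAt H (1/(r*(1-Real.log r))) r := by
      intro r hr hr1
      have hlr : Real.log r < 0 := Real.log_neg hr hr1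
      have h1l : (0:ℝ) < 1 - Real.log r := by linarith
      have hin : HasDerivAt (fun x : ℝ => 1 - Real.log x) (-(r⁻¹)) r :=
        (Real.hasDerivAt_log (ne_of_gt hr)).const_sub 1
      have hout := (Real.hasDerivAt_log (ne_of_gt h1l)).comp r hin
      have := hout.neg
      refine this.congr_deriv ?_
      field_simp
    -- integral comparison for each a
    have key2 : ∀ a : ℝ, 0 < a → a < ε/2 → 4*η*(H (ε/2) - H a) ≤ IB := by
      intro a ha haε
      have hae : a ≤ ε/2 := le_of_lt haε
      have hIccsub : ∀ x ∈ Set.Icc a (ε/2), 0 < x ∧ x < 1 := by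
        intro x hx
        exact ⟨lt_of_lt_of_le ha hx.1, lt_of_le_of_lt hx.2 (by linarith)⟩
      have hcont : ContinuousOn (fun r : ℝ => 4*η*(1/(r*(1-Real.log r)))) (Set.Icc a (ε/2)) := by
        apply ContinuousOn.mul continuousOn_const
        apply ContinuousOn.div continuousOn_const
        · apply ContinuousOn.mul continuousOn_id
          apply ContinuousOn.sub continuousOn_const
          apply Real.continuousOn_log.mono
          intro x hx
          exact ne_of_gt (hIccsub x hx).1
        · intro x hx
          obtain ⟨hx0, hx1⟩ := hIccsub x hx
          have hlx : Real.log x < 0 := Real.log_neg hx0 hx1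
          have h1l : (0:ℝ) < 1 - Real.log x := by linarith
          exact ne_of_gt (mul_pos hx0 h1l)
      have hii : IntervalIntegrable (fun r : ℝ => 4*η*(1/(r*(1-Real.log r)))) volume a (ε/2) := by
        apply ContinuousOn.intervalIntegrable
        rwa [Set.uIcc_of_le hae]
      have hBii : IntervalIntegrable B volume a (ε/2) := by
        rw [intervalIntegrable_iff_integrableOn_Ioc_of_le hae]
        exact hB_int.mono_set (fun x hx => lt_trans ha hx.1)
      have hFTC2 : ∫ r in a..(ε/2), 4*η*(1/(r*(1-Real.log r))) = 4*η*(H (ε/2) - H a) := by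
        have : ∀ x ∈ Set.uIcc a (ε/2), HasDerivAt (fun r => 4*η*H r)
            (4*η*(1/(x*(1-Real.log x)))) x := by
          intro x hx
          rw [Set.uIcc_of_le hae] at hx
          obtain ⟨hx0, hx1⟩ := hIccsub x hx
          exact (hHder x hx0 hx1).const_mul (4*η)
        rw [intervalIntegral.integral_eq_sub_of_hasDerivAt this hii]
        ring
      have hmono2 : ∫ r in a..(ε/2), 4*η*(1/(r*(1-Real.log r))) ≤ ∫ r in a..(ε/2), B r := by
        apply intervalIntegral.integral_mono_on hae hii hBii
        intro x hx
        obtain ⟨hx0, _⟩ := hIccsub x hx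
        have hxε : x < ε := lt_of_le_of_lt hx.2 (by linarith)
        have := hBlow x hx0 hxε
        calc 4*η*(1/(x*(1-Real.log x))) = 4*η/(x*(1-Real.log x)) := by ring
        _ ≤ B x := this
      have hBle : ∫ r in a..(ε/2), B r ≤ IB := by
        rw [intervalIntegral.integral_of_le hae]
        apply setIntegral_mono_set hB_int
        · rw [EventuallyLE, ae_restrict_iff' measurableSet_Ioi]
          filter_upwards with r hr using hB_nonneg r hr
        · exact HasSubset.Subset.eventuallyLE (fun x hx => lt_trans ha hx.1)
      linarith [hFTC2 ▸ hmono2]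
    -- choose a := exp (1 - exp T) for large T
    set T : ℝ := max (1 + |Real.log (ε/2)|) (IB/(4*η) + |H (ε/2)| + 1) with hT_def
    set a : ℝ := Real.exp (1 - Real.exp T) with ha_def
    have ha_pos : 0 < a := Real.exp_pos _
    have hεhalf : (0:ℝ) < ε/2 := by linarith
    have ha_lt : a < ε/2 := by
      have h1 : Real.exp T ≥ T + 1 := by
        have := Real.add_one_le_exp T; linarith
      have h2 : a ≤ Real.exp (-T) := by
        apply Real.exp_le_exp.2; linarith
      have h3 : Real.exp (-T) < ε/2 := by
        rw [← Real.exp_log hεhalf]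
        apply Real.exp_lt_exp.2
        have h4 : T ≥ 1 + |Real.log (ε/2)| := le_max_left _ _
        have h5 : -|Real.log (ε/2)| ≤ Real.log (ε/2) := neg_abs_le _
        linarith
      linarith
    have hHa : H a = -T := by
      rw [hH_def, ha_def]
      simp only [Real.log_exp]
      have : (1:ℝ) - (1 - Real.exp T) = Real.exp T := by ring
      rw [this, Real.log_exp]
    have := key2 a ha_pos ha_lt
    rw [hHa] at this
    have hT2 : T ≥ IB/(4*η) + |H (ε/2)| + 1 := le_max_right _ _
    have h5 : -|H (ε/2)| ≤ H (ε/2) := neg_abs_le _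
    have h4η : (0:ℝ) < 4*η := by linarith
    have e : 4*η*(IB/(4*η)) = IB := by field_simp
    nlinarith [this, mul_le_mul_of_nonneg_left hT2 h4η.le, mul_le_mul_of_nonneg_left h5 h4η.le, e]
  -- claim near infinity
  have claimInf : ∀ η : ℝ, 0 < η → ∀ M : ℝ, 1 ≤ M →
      ∃ x : ℝ, M < x ∧ |G x| < η := by
    intro η hη M hM
    by_contra hcon
    push_neg at hcon
    have hBlow : ∀ r : ℝ, M < r → η/r ≤ B r := by
      intro r hr
      have hr1 : 1 < r := lt_of_le_of_lt hM hr
      have hr0 : (0:ℝ) < r := by linarith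
      have hlogr : 0 < Real.log r := Real.log_pos hr1
      have hphineg : phi r < 0 := by
        rw [phi]
        have : 0 < Real.log r + r^2/2 := by positivity
        linarith
      have habs : |G r| = (f r)^2 * (-phi r) / 8 := by
        simp only [hG_def]
        rw [abs_of_nonpos]
        · ring
        · have h1 : (f r)^2 * phi r ≤ 0 :=
            mul_nonpos_of_nonneg_of_nonpos (sq_nonneg _) hphineg.le
          linarith
      have hc := hcon r hr
      rw [habs] at hc
      have hphibound : -phi r ≤ r^2 := by
        rw [phi]
        have hlog_le : Real.log r ≤ r := (Real.log_le_sub_one_of_pos hr0).trans (by linarith)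
        nlinarith
      have hnphi_pos : 0 < -phi r := by linarith
      have hf2 : 8*η/(-phi r) ≤ (f r)^2 := by
        rw [div_le_iff₀ hnphi_pos]; nlinarith
      have hf2' : 8*η/r^2 ≤ (f r)^2 := by
        exact div_le_div_of_nonneg_left (by linarith) hnphi_pos hphibound |>.trans hf2
      rw [hBval r hr0]
      rw [div_le_div_iff₀ hr0 (by positivity)]
      have hkey : 8*η ≤ (f r)^2 * r^2 := by
        have e : 8*η/r^2*r^2 = 8*η := by field_simp
        nlinarith [mul_le_mul_of_nonneg_right hf2' (sq_nonneg r)]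
      nlinarith [sq_nonneg (f r), sq_nonneg r, hkey]
    -- integral comparison
    have key2 : ∀ b : ℝ, M + 1 ≤ b → η * Real.log (b/(M+1)) ≤ IB := by
      intro b hb
      have hM1 : (0:ℝ) < M + 1 := by linarith
      have hsub2 : ∀ x ∈ Set.Icc (M+1) b, M < x := by
        intro x hx; linarith [hx.1]
      have hcont : ContinuousOn (fun r : ℝ => η * (1/r)) (Set.Icc (M+1) b) := by
        apply ContinuousOn.mul continuousOn_const
        apply ContinuousOn.div continuousOn_const continuousOn_id
        intro x hx
        have hx' := hsub2 x hx
        show x ≠ 0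
        exact ne_of_gt (by linarith)
      have hii : IntervalIntegrable (fun r : ℝ => η * (1/r)) volume (M+1) b := by
        apply ContinuousOn.intervalIntegrable
        rwa [Set.uIcc_of_le hb]
      have hBii : IntervalIntegrable B volume (M+1) b := by
        rw [intervalIntegrable_iff_integrableOn_Ioc_of_le hb]
        exact hB_int.mono_set (fun x hx => lt_trans hM1 hx.1)
      have hval : ∫ r in (M+1)..b, η * (1/r) = η * Real.log (b/(M+1)) := by
        rw [intervalIntegral.integral_const_mul, integral_one_div]
        intro h
        rw [Set.uIcc_of_le hb] at h
        linarith [h.1]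
      have hmono2 : ∫ r in (M+1)..b, η * (1/r) ≤ ∫ r in (M+1)..b, B r := by
        apply intervalIntegral.integral_mono_on hb hii hBii
        intro x hx
        have hMx := hsub2 x hx
        have hx0 : (0:ℝ) < x := lt_trans (by linarith) hMx
        calc η * (1/x) = η/x := by ring
        _ ≤ B x := hBlow x hMx
      have hBle : ∫ r in (M+1)..b, B r ≤ IB := by
        rw [intervalIntegral.integral_of_le hb]
        apply setIntegral_mono_set hB_int
        · rw [EventuallyLE, ae_restrict_iff' measurableSet_Ioi]
          filter_upwards with r hr using hB_nonneg r hr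
        · exact HasSubset.Subset.eventuallyLE (fun x hx => lt_trans hM1 hx.1)
      linarith [hval ▸ hmono2]
    -- choose b large
    have hM1 : (0:ℝ) < M + 1 := by linarith
    set b : ℝ := (M+1) * Real.exp (IB/η + 1) with hb_def
    have hexp1 : (1:ℝ) ≤ Real.exp (IB/η + 1) := by
      rw [← Real.exp_zero]
      apply Real.exp_le_exp.2
      positivity
    have hbge : M + 1 ≤ b := by
      rw [hb_def]; nlinarith
    have := key2 b hbge
    have hlogb : Real.log (b/(M+1)) = IB/η + 1 := by
      have e2 : b/(M+1) = Real.exp (IB/η + 1) := by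
        rw [hb_def, mul_comm, mul_div_assoc, div_self (ne_of_gt hM1), mul_one]
      rw [e2, Real.log_exp]
    rw [hlogb] at this
    have e : η * (IB/η) = IB := by field_simp
    nlinarith [this, e]
  -- exhausting sequence of sets
  set s : ℕ → Set ℝ := fun n => Set.Ioc (1/((n:ℝ)+1)) ((n:ℝ)+1) with hs_def
  have hsm : ∀ n, MeasurableSet (s n) := fun n => measurableSet_Ioc
  have hs_mono : Monotone s := by
    intro n m hnm
    apply Set.Ioc_subset_Ioc
    · apply one_div_le_one_div_of_le (by positivity)
      have : (n:ℝ) ≤ (m:ℝ) := by exact_mod_cast hnm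
      linarith
    · have : (n:ℝ) ≤ (m:ℝ) := by exact_mod_cast hnm
      linarith
  have hUnion : (⋃ n, s n) = Set.Ioi 0 := by
    ext x
    simp only [Set.mem_iUnion, Set.mem_Ioc, Set.mem_Ioi, hs_def]
    constructor
    · rintro ⟨n, h1, _⟩
      exact lt_trans (by positivity) h1
    · intro hx
      obtain ⟨n, hn⟩ := exists_nat_ge (max x (1/x))
      have hn1 : (1/x : ℝ) ≤ n := le_trans (le_max_right _ _) hn
      have hn2 : (x : ℝ) ≤ n := le_trans (le_max_left _ _) hn
      refine ⟨n, ?_, by linarith⟩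
      rw [div_lt_iff₀ (by positivity)]
      have : (1:ℝ) ≤ (1/x) * x := by rw [one_div_mul_cancel (ne_of_gt hx)]
      nlinarith
  have htend : Tendsto (fun n => ∫ r in s n, B r) atTop (nhds IB) := by
    have := tendsto_setIntegral_of_monotone hsm hs_mono (hUnion ▸ hB_int)
    rwa [hUnion] at this
  -- final estimate
  have key : ∀ η : ℝ, 0 < η → (1/8) * IB ≤ IA + η := by
    intro η hη
    have hη3 : 0 < η/3 := by linarith
    obtain ⟨N, hN⟩ := Metric.tendsto_atTop.mp htend (η/3) hη3
    have hdist := hN N (le_refl N)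
    rw [Real.dist_eq] at hdist
    have hIocN : IB - η/3 < ∫ r in s N, B r := by
      have := abs_lt.mp hdist
      linarith [this.1]
    set a₀ : ℝ := 1/((N:ℝ)+1) with ha₀_def
    set b₀ : ℝ := (N:ℝ)+1 with hb₀_def
    have ha₀_pos : 0 < a₀ := by positivity
    have hε_pos : 0 < min a₀ (1/2) := lt_min ha₀_pos (by norm_num)
    obtain ⟨xa, hxa0, hxa_lt, hGa⟩ := claim0 (η/3) hη3 (min a₀ (1/2)) hε_pos (min_le_right _ _)
    have hb₀1 : (1:ℝ) ≤ max b₀ 1 := le_max_right _ _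
    obtain ⟨xb, hxb, hGb⟩ := claimInf (η/3) hη3 (max b₀ 1) hb₀1
    have hxa_le : xa ≤ a₀ := le_of_lt (lt_of_lt_of_le hxa_lt (min_le_left _ _))
    have hxb_ge : b₀ ≤ xb := le_of_lt (lt_of_le_of_lt (le_max_left _ _) hxb)
    have hab : xa ≤ xb := by
      have h1 : xa < 1/2 := lt_of_lt_of_le hxa_lt (min_le_right _ _)
      have h2 : (1:ℝ) < xb := lt_of_le_of_lt hb₀1 hxb
      linarith
    have hsubN : s N ⊆ Set.Ioc xa xb := Set.Ioc_subset_Ioc hxa_le hxb_ge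
    have hIocsub : Set.Ioc xa xb ⊆ Set.Ioi 0 := fun x hx => lt_trans hxa0 hx.1
    have h1 : ∫ r in s N, B r ≤ ∫ r in Set.Ioc xa xb, B r := by
      apply setIntegral_mono_set (hB_int.mono_set hIocsub)
      · rw [EventuallyLE, ae_restrict_iff' measurableSet_Ioc]
        filter_upwards with r hr using hB_nonneg r (hIocsub hr)
      · exact HasSubset.Subset.eventuallyLE hsubN
    have h2 := main xa xb hxa0 hab
    have hGa' : G xa ≤ η/3 := le_trans (le_abs_self _) hGa.le
    have hGb' : -(η/3) ≤ G xb := by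
      have := abs_lt.mp hGb
      linarith [this.1]
    linarith
  have : (1/8) * IB ≤ IA := by
    by_contra hcon
    push_neg at hcon
    have := key (((1/8)*IB - IA)/2) (by linarith)
    linarith
  exact this
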